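/- arXiv:1905.02684 — 4 statements merged into one kernel-verified Lean document; each statement's English description precedes it below -/
import Mathlib

section
/- Let η > 0, ℓ ≥ 1, and define α(r, ℓ) = r·(1 - (1/(2η))·(2η·r)^(2^ℓ)) for r ≥ 0. Then α(·, ℓ) is strictly increasing on [0, ε̄(ℓ)) where ε̄(ℓ) = (2η)^((1/2^ℓ) - 1) · (1/(1 + 2^ℓ))^(1/2^ℓ). -/
theorem sspc_alpha_strict_mono (η : ℝ) (hη : 0 < η) (ℓ : ℕ) (hℓ : 1 ≤ ℓ) :
    StrictMonoOn (fun r : ℝ => r * (1 - (1 / (2 * η)) * (2 * η * r) ^ (2 ^ ℓ)))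
      (Set.Ico 0 ((2 * η) ^ ((1 : ℝ) / 2 ^ ℓ - 1) *
        (1 / (1 + (2 : ℝ) ^ ℓ)) ^ ((1 : ℝ) / 2 ^ ℓ))) := by
  have h2η : (0:ℝ) < 2 * η := by linarith
  have h2η' : (2*η : ℝ) ≠ 0 := ne_of_gt h2η
  set n : ℕ := 2 ^ ℓ with hn
  have hn1 : 1 ≤ n := Nat.one_le_two_pow
  have hcastn : ((n : ℝ)) = (2:ℝ) ^ ℓ := by
    simp [hn]
  set K : ℝ := (2*η) ^ n / (2*η) with hK
  set ε : ℝ := (2 * η) ^ ((1 : ℝ) / 2 ^ ℓ - 1) *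
      (1 / (1 + (2 : ℝ) ^ ℓ)) ^ ((1 : ℝ) / 2 ^ ℓ) with hε
  have hfun : (fun r : ℝ => r * (1 - (1 / (2 * η)) * (2 * η * r) ^ n))
      = fun r : ℝ => r - K * r ^ (n + 1) := by
    funext r
    rw [hK, mul_pow]
    field_simp
    ring
  rw [hfun]
  -- ε^n value
  have hnpos : (0:ℝ) < 1 + (2:ℝ)^ℓ := by positivity
  have hεn : ε ^ n = (2*η) ^ ((1:ℝ) - n) * (1 / (1 + (n:ℝ))) := by
    rw [hε, mul_pow, ← Real.rpow_natCast ((2*η) ^ ((1 : ℝ) / 2 ^ ℓ - 1)) n,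
        ← Real.rpow_natCast ((1 / (1 + (2:ℝ)^ℓ)) ^ ((1 : ℝ) / 2 ^ ℓ)) n,
        ← Real.rpow_mul (le_of_lt h2η), ← Real.rpow_mul (by positivity)]
    rw [hcastn]
    have h2ℓ : ((2:ℝ)^ℓ) ≠ 0 := by positivity
    rw [show ((1:ℝ)/2^ℓ - 1) * (2:ℝ)^ℓ = 1 - (2:ℝ)^ℓ by field_simp,
        show ((1:ℝ)/2^ℓ) * (2:ℝ)^ℓ = 1 by field_simp]
    rw [Real.rpow_one]
  have hεpos : 0 < ε := by
    rw [hε]; positivity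
  have hKεn : K * ((n:ℝ) + 1) * ε ^ n = 1 := by
    have hKr : K = (2*η) ^ ((n:ℝ) - 1) := by
      rw [hK, Real.rpow_sub h2η, Real.rpow_natCast, Real.rpow_one]
    rw [hεn, hKr]
    rw [show (2*η) ^ ((n:ℝ) - 1) * ((n:ℝ)+1) * ((2*η) ^ ((1:ℝ) - n) * (1/(1+(n:ℝ))))
        = ((2*η) ^ ((n:ℝ) - 1) * (2*η) ^ ((1:ℝ) - n)) * (((n:ℝ)+1) * (1/(1+(n:ℝ)))) by ring]
    rw [← Real.rpow_add h2η]
    have : ((n:ℝ) - 1) + ((1:ℝ) - n) = 0 := by ring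
    rw [this, Real.rpow_zero]
    have hne : (1 + (n:ℝ)) ≠ 0 := by positivity
    field_simp
    ring
  have hKpos : 0 < K := by rw [hK]; positivity
  apply strictMonoOn_of_deriv_pos (convex_Ico _ _)
  · exact Continuous.continuousOn (by continuity)
  · intro x hx
    rw [interior_Ico] at hx
    obtain ⟨hx0, hxε⟩ := hx
    have hd : HasDerivAt (fun r : ℝ => r - K * r ^ (n + 1))
        (1 - K * ((n + 1 : ℕ) * x ^ n)) x := by
      simpa using (hasDerivAt_id' x).fun_sub ((hasDerivAt_pow (n+1) x).const_mul K)
    rw [hd.deriv]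
    have hxn : x ^ n < ε ^ n :=
      pow_lt_pow_left₀ hxε (le_of_lt hx0) (Nat.one_le_iff_ne_zero.mp hn1)
    have : K * ((n:ℝ) + 1) * x ^ n < 1 := by
      calc K * ((n:ℝ) + 1) * x ^ n < K * ((n:ℝ) + 1) * ε ^ n := by
            apply mul_lt_mul_of_pos_left hxn
            positivity
        _ = 1 := hKεn
    have hcast : ((n + 1 : ℕ) : ℝ) = (n:ℝ) + 1 := by push_cast; ring
    rw [hcast]
    nlinarith
end

section
/- Suppose V : ℝⁿ → ℝ is continuous, α₁, α₂ are strictly increasing continuous functions vanishing at 0 with α₁(‖x‖) ≤ V(x) ≤ α₂(‖x‖) for all x, and along trajectories of x_{k+1} = f(x_k, u_k) we have V(f(x,u)) - V(x) ≤ -c·V(x) + σ(‖u‖) with c ∈ (0,1) and σ strictly increasing with σ(0)=0. If the inputs satisfy ‖u_k‖ ≤ r for all k, then for every solution, limsup_{k→∞} V(x_k) ≤ σ(r)/c. -/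
theorem iss_lyapunov_limsup (n m : ℕ)
    (f : EuclideanSpace ℝ (Fin n) → EuclideanSpace ℝ (Fin m) → EuclideanSpace ℝ (Fin n))
    (V : EuclideanSpace ℝ (Fin n) → ℝ) (hV : Continuous V)
    (α₁ α₂ σ : ℝ → ℝ)
    (hα₁ : StrictMonoOn α₁ (Set.Ici 0)) (hα₁c : Continuous α₁) (hα₁0 : α₁ 0 = 0)
    (hα₂ : StrictMonoOn α₂ (Set.Ici 0)) (hα₂c : Continuous α₂) (hα₂0 : α₂ 0 = 0)
    (hσ : StrictMonoOn σ (Set.Ici 0)) (hσc : Continuous σ) (hσ0 : σ 0 = 0)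
    (hsandwich : ∀ x, α₁ ‖x‖ ≤ V x ∧ V x ≤ α₂ ‖x‖)
    (c : ℝ) (hc : c ∈ Set.Ioo (0 : ℝ) 1)
    (hdecay : ∀ x u, V (f x u) - V x ≤ -c * V x + σ ‖u‖)
    (x : ℕ → EuclideanSpace ℝ (Fin n)) (u : ℕ → EuclideanSpace ℝ (Fin m))
    (htraj : ∀ k, x (k + 1) = f (x k) (u k))
    (r : ℝ) (hr : 0 ≤ r) (hu : ∀ k, ‖u k‖ ≤ r) :
    Filter.limsup (fun k => V (x k)) Filter.atTop ≤ σ r / c := by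
  obtain ⟨hc0, hc1⟩ := hc
  set L : ℝ := σ r / c with hL
  have hcL : c * L = σ r := by rw [hL]; field_simp
  have h1c : 0 ≤ 1 - c := by linarith
  -- step inequality
  have hstep : ∀ k, V (x (k + 1)) ≤ (1 - c) * V (x k) + σ r := by
    intro k
    have h1 := hdecay (x k) (u k)
    have h2 : σ ‖u k‖ ≤ σ r :=
      hσ.monotoneOn (Set.mem_Ici.mpr (norm_nonneg _)) (Set.mem_Ici.mpr hr) (hu k)
    rw [htraj k]
    nlinarith
  -- geometric bound
  have hbound : ∀ k, V (x k) ≤ L + (1 - c) ^ k * (V (x 0) - L) := by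
    intro k
    induction k with
    | zero => simp
    | succ k ih =>
      have := hstep k
      have hmul : (1 - c) * V (x k) ≤ (1 - c) * (L + (1 - c) ^ k * (V (x 0) - L)) :=
        mul_le_mul_of_nonneg_left ih h1c
      calc V (x (k + 1)) ≤ (1 - c) * V (x k) + σ r := hstep k
        _ ≤ (1 - c) * (L + (1 - c) ^ k * (V (x 0) - L)) + σ r := by linarith
        _ = L + (1 - c) ^ (k + 1) * (V (x 0) - L) := by
            have hkey : (1 - c) * L + σ r = L := by
              rw [hL]; field_simp; ring
            rw [pow_succ]; linear_combination hkey
  -- the bound tends to L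
  have htend : Filter.Tendsto (fun k => L + (1 - c) ^ k * (V (x 0) - L))
      Filter.atTop (nhds L) := by
    have hgeo : Filter.Tendsto (fun k : ℕ => (1 - c) ^ k) Filter.atTop (nhds 0) := by
      apply tendsto_pow_atTop_nhds_zero_of_abs_lt_one
      rw [abs_lt]; constructor <;> linarith
    have := (hgeo.mul_const (V (x 0) - L)).const_add L
    simpa using this
  have hVnn : ∀ k, 0 ≤ V (x k) := by
    intro k
    have := (hsandwich (x k)).1
    have h0 : α₁ 0 ≤ α₁ ‖x k‖ :=
      hα₁.monotoneOn (Set.mem_Ici.mpr le_rfl) (Set.mem_Ici.mpr (norm_nonneg _)) (norm_nonneg _)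
    rw [hα₁0] at h0
    linarith
  have hcobdd : Filter.IsCoboundedUnder (· ≤ ·) Filter.atTop (fun k => V (x k)) :=
    Filter.isCoboundedUnder_le_of_le Filter.atTop (fun k => hVnn k)
  have hbdd : Filter.IsBoundedUnder (· ≤ ·) Filter.atTop
      (fun k => L + (1 - c) ^ k * (V (x 0) - L)) := htend.isBoundedUnder_le
  calc Filter.limsup (fun k => V (x k)) Filter.atTop
      ≤ Filter.limsup (fun k => L + (1 - c) ^ k * (V (x 0) - L)) Filter.atTop :=
        Filter.limsup_le_limsup (Filter.Eventually.of_forall hbound) hcobdd hbdd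
    _ = L := htend.limsup_eq
end

section
/- Small-gain theorem for asymptotic gains (scalar sequence version): let (x_k), (e_k) be nonnegative sequences that are bounded, and let γ₁, γ₂ : ℝ≥0 → ℝ≥0 be continuous nondecreasing functions with γ₁(0) = γ₂(0) = 0 such that limsup x_k ≤ γ₁(limsup e_k) and limsup e_k ≤ γ₂(limsup x_k). If γ₁(γ₂(s)) < s for all s > 0, then limsup x_k = 0 and limsup e_k = 0, i.e., both sequences converge to 0. -/
open Filter

theorem small_gain_theorem (x e : ℕ → ℝ)
    (hx : ∀ k, 0 ≤ x k) (he : ∀ k, 0 ≤ e k)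
    (hxb : ∃ M, ∀ k, x k ≤ M) (heb : ∃ M, ∀ k, e k ≤ M)
    (γ₁ γ₂ : ℝ → ℝ) (hγ₁c : Continuous γ₁) (hγ₂c : Continuous γ₂)
    (hγ₁m : Monotone γ₁) (hγ₂m : Monotone γ₂)
    (hγ₁0 : γ₁ 0 = 0) (hγ₂0 : γ₂ 0 = 0)
    (hg1 : Filter.limsup x Filter.atTop ≤ γ₁ (Filter.limsup e Filter.atTop))
    (hg2 : Filter.limsup e Filter.atTop ≤ γ₂ (Filter.limsup x Filter.atTop))
    (hsg : ∀ s : ℝ, 0 < s → γ₁ (γ₂ s) < s) :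
    Filter.limsup x Filter.atTop = 0 ∧ Filter.limsup e Filter.atTop = 0 ∧
      Filter.Tendsto x Filter.atTop (nhds 0) ∧ Filter.Tendsto e Filter.atTop (nhds 0) := by
  obtain ⟨M, hM⟩ := hxb
  obtain ⟨N, hN⟩ := heb
  have hxbdd : IsBoundedUnder (· ≤ ·) atTop x := isBoundedUnder_of ⟨M, hM⟩
  have hebdd : IsBoundedUnder (· ≤ ·) atTop e := isBoundedUnder_of ⟨N, hN⟩
  have hxbdd' : IsBoundedUnder (· ≥ ·) atTop x := isBoundedUnder_of ⟨0, hx⟩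
  have hebdd' : IsBoundedUnder (· ≥ ·) atTop e := isBoundedUnder_of ⟨0, he⟩
  have hX0 : 0 ≤ limsup x atTop :=
    le_limsup_of_frequently_le (Frequently.of_forall hx) hxbdd
  have hE0 : 0 ≤ limsup e atTop :=
    le_limsup_of_frequently_le (Frequently.of_forall he) hebdd
  have hX : limsup x atTop = 0 := by
    rcases hX0.eq_or_lt with h | h
    · exact h.symm
    · exfalso
      have : limsup x atTop ≤ γ₁ (γ₂ (limsup x atTop)) :=
        hg1.trans (hγ₁m hg2)
      exact absurd this (not_le.mpr (hsg _ h))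
  have hE : limsup e atTop = 0 := by
    have : limsup e atTop ≤ 0 := by
      have := hg2; rw [hX, hγ₂0] at this; exact this
    exact le_antisymm this hE0
  have hXlin : 0 ≤ liminf x atTop :=
    le_liminf_of_le hxbdd.isCoboundedUnder_ge (Eventually.of_forall hx)
  have hElin : 0 ≤ liminf e atTop :=
    le_liminf_of_le hebdd.isCoboundedUnder_ge (Eventually.of_forall he)
  have hXli : liminf x atTop = 0 :=
    le_antisymm (hX ▸ liminf_le_limsup hxbdd hxbdd') hXlin
  have hEli : liminf e atTop = 0 :=
    le_antisymm (hE ▸ liminf_le_limsup hebdd hebdd') hElin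
  exact ⟨hX, hE, tendsto_of_liminf_eq_limsup hXli hX hxbdd hxbdd',
    tendsto_of_liminf_eq_limsup hEli hE hebdd hebdd'⟩
end

section
/- For any real numbers a, b the Fischer-Burmeister function satisfies the bound |ψ(a,b)|·(2 + √2)⁻¹ ≤ ‖(min(a,b,0), max(0, min(a,b)))‖ in the following simpler form: (2 - √2)·|min(a,b)| ≤ |ψ(a,b)| ≤ (2 + √2)·|min(a,b)|, i.e., ψ is equivalent to the min NCP function up to multiplicative constants. -/
theorem fb_aux (a b : ℝ) (hab : a ≤ b) :
    (2 - Real.sqrt 2) * |min a b| ≤ |a + b - Real.sqrt (a ^ 2 + b ^ 2)| ∧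
      |a + b - Real.sqrt (a ^ 2 + b ^ 2)| ≤ (2 + Real.sqrt 2) * |min a b| := by
  have t2 : Real.sqrt 2 ^ 2 = 2 := Real.sq_sqrt (by norm_num)
  have t0 : 0 ≤ Real.sqrt 2 := Real.sqrt_nonneg 2
  have t1 : 1 ≤ Real.sqrt 2 := by nlinarith
  have tle : Real.sqrt 2 ≤ 2 := by nlinarith
  set t := Real.sqrt 2 with htdef
  have hm : min a b = a := min_eq_left hab
  rw [hm]
  set s := Real.sqrt (a ^ 2 + b ^ 2) with hsdef
  have hs0 : 0 ≤ s := Real.sqrt_nonneg _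
  have hs2 : s ^ 2 = a ^ 2 + b ^ 2 := Real.sq_sqrt (by positivity)
  have hsb : b ≤ s := by
    have h1 : |b| ≤ s := by
      rw [hsdef, ← Real.sqrt_sq_eq_abs]
      exact Real.sqrt_le_sqrt (by nlinarith)
    exact (le_abs_self b).trans h1
  rcases le_or_gt 0 a with ha | ha
  · have hb : 0 ≤ b := le_trans ha hab
    have hsle : s ≤ a + b := by
      have h := Real.sqrt_le_sqrt (show a ^ 2 + b ^ 2 ≤ (a + b) ^ 2 by nlinarith)
      rwa [Real.sqrt_sq (by linarith)] at h
    have hψ : 0 ≤ a + b - s := by linarith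
    rw [abs_of_nonneg ha, abs_of_nonneg hψ]
    constructor
    · have key : s ≤ b + (t - 1) * a := by
        have h := Real.sqrt_le_sqrt (show a ^ 2 + b ^ 2 ≤ (b + (t - 1) * a) ^ 2 by
          nlinarith [mul_nonneg ha (sub_nonneg.2 hab)])
        rwa [Real.sqrt_sq (by nlinarith)] at h
      nlinarith
    · nlinarith
  · have hψ : a + b - s < 0 := by linarith
    rw [abs_of_neg ha, abs_of_neg hψ]
    constructor
    · rcases le_or_gt ((t - 1) * a + b) 0 with h | h
      · nlinarith
      · have key : (t - 1) * a + b ≤ s := by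
          have h2 := Real.sqrt_le_sqrt (show ((t - 1) * a + b) ^ 2 ≤ a ^ 2 + b ^ 2 by
            nlinarith [mul_nonneg (mul_nonneg (sub_nonneg.2 t1) (neg_nonneg.2 ha.le)) (sub_nonneg.2 hab)])
          rwa [Real.sqrt_sq h.le] at h2
        nlinarith
    · have key : s ≤ b - (1 + t) * a := by
        have h := Real.sqrt_le_sqrt (show a ^ 2 + b ^ 2 ≤ (b - (1 + t) * a) ^ 2 by
          nlinarith [mul_nonneg (mul_nonneg (by linarith : (0:ℝ) ≤ 1 + t) (neg_nonneg.2 ha.le)) (sub_nonneg.2 hab)])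
        rwa [Real.sqrt_sq (by nlinarith)] at h
      nlinarith

theorem fischer_burmeister_min_equiv (a b : ℝ) :
    (2 - Real.sqrt 2) * |min a b| ≤ |a + b - Real.sqrt (a ^ 2 + b ^ 2)| ∧
      |a + b - Real.sqrt (a ^ 2 + b ^ 2)| ≤ (2 + Real.sqrt 2) * |min a b| := by
  rcases le_total a b with h | h
  · exact fb_aux a b h
  · have := fb_aux b a h
    rwa [min_comm b a, add_comm b a, add_comm (b ^ 2) (a ^ 2)] at this
end
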